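/- If G is a finite nilpotent group with a cyclic or generalized quaternion Sylow p-subgroup for some prime p, then the cyclic graph Δ(G) has a dominating vertex. -/

import Mathlib

/-- The cyclic graph of a group: vertices are the nonidentity elements,
two distinct vertices are adjacent iff they generate a cyclic subgroup. -/
def cyclicGraph (G : Type*) [Group G] : SimpleGraph {g : G // g ≠ 1} where
  Adj x y := x ≠ y ∧ IsCyclic (Subgroup.closure ({x.1, y.1} : Set G))
  symm := by
    refine ⟨?_⟩
    rintro x y ⟨hne, hc⟩
    exact ⟨hne.symm, by rwa [Set.pair_comm]⟩
  loopless := by refine ⟨?_⟩; rintro x ⟨hne, -⟩; exact hne rfl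

/-- A group is a Frobenius group if it has a nontrivial proper subgroup `H`
with `H ∩ H^g = 1` for every `g ∉ H`. -/
def IsFrobenius (G : Type*) [Group G] : Prop :=
  ∃ H : Subgroup G, H ≠ ⊥ ∧ H ≠ ⊤ ∧
    ∀ g : G, g ∉ H → ∀ x : G, x ∈ H → g * x * g⁻¹ ∈ H → x = 1

/-- A group is generalized quaternion if it is isomorphic to `QuaternionGroup (2 ^ m)`
for some `m ≥ 1` (i.e. a generalized quaternion group of order `2 ^ (m + 2)`). -/
def IsGeneralizedQuaternion (P : Type*) [Group P] : Prop :=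
  ∃ m : ℕ, 1 ≤ m ∧ Nonempty (P ≃* QuaternionGroup (2 ^ m))

/- ## Auxiliary lemmas -/

lemma aux_isCyclic_zpowers {G : Type*} [Group G] (w : G) :
    IsCyclic (Subgroup.zpowers w) := by
  refine ⟨⟨⟨w, Subgroup.mem_zpowers w⟩, fun x => ?_⟩⟩
  obtain ⟨k, hk⟩ := Subgroup.mem_zpowers_iff.mp x.2
  exact Subgroup.mem_zpowers_iff.mpr ⟨k, Subtype.ext (by simpa using hk)⟩

/-- If `x` and `z` have the same prime order `p` and `x ∈ ⟨z⟩`, then `⟨x⟩ = ⟨z⟩`. -/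
lemma aux_zpowers_eq {G : Type*} [Group G] [Finite G] {p : ℕ} (_hp : p.Prime) {x z : G}
    (hx : orderOf x = p) (hz : orderOf z = p) (hmem : x ∈ Subgroup.zpowers z) :
    Subgroup.zpowers x = Subgroup.zpowers z := by
  refine Subgroup.eq_of_le_of_card_ge (Subgroup.zpowers_le.mpr hmem) ?_
  rw [Nat.card_zpowers, Nat.card_zpowers, hx, hz]

/-- The generalized quaternion group `QuaternionGroup (2 ^ m)` has a unique
element of order `2`. -/
lemma aux_quat_inv {m : ℕ} (u : QuaternionGroup (2 ^ m))
    (hu : orderOf u = 2) : u = QuaternionGroup.a ((2 ^ m : ℕ) : ZMod (2 * 2 ^ m)) := by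
  haveI : NeZero (2 ^ m) := ⟨pow_ne_zero m two_ne_zero⟩
  haveI : NeZero (2 * 2 ^ m) := ⟨by positivity⟩
  cases u with
  | xa i => rw [QuaternionGroup.orderOf_xa] at hu; omega
  | a i =>
    rw [QuaternionGroup.orderOf_a] at hu
    have hn0 : (2 : ℕ) ^ m ≠ 0 := pow_ne_zero m two_ne_zero
    have hg : Nat.gcd (2 * 2 ^ m) i.val ∣ 2 * 2 ^ m := Nat.gcd_dvd_left _ _
    have hgpos : 0 < Nat.gcd (2 * 2 ^ m) i.val := by
      rcases Nat.eq_zero_or_pos (Nat.gcd (2 * 2 ^ m) i.val) with h | h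
      · rw [h] at hu; simp at hu
      · exact h
    have h2n : 2 * 2 ^ m = 2 * Nat.gcd (2 * 2 ^ m) i.val :=
      (Nat.div_eq_iff_eq_mul_left hgpos hg).mp hu
    have hgn : Nat.gcd (2 * 2 ^ m) i.val = 2 ^ m := by omega
    have hdvd : (2:ℕ) ^ m ∣ i.val := by
      have h := Nat.gcd_dvd_right (2 * 2 ^ m) i.val
      rwa [hgn] at h
    have hlt : i.val < 2 * 2 ^ m := ZMod.val_lt i
    have hne : i.val ≠ 0 := by
      intro h
      rw [h, Nat.gcd_zero_right] at hgn
      omega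
    have hval : i.val = 2 ^ m := by
      obtain ⟨c, hc⟩ := hdvd
      have hn1 : 0 < (2:ℕ) ^ m := Nat.pos_of_ne_zero hn0
      have hc2 : c < 2 := by nlinarith
      have hcne : c ≠ 0 := fun h => hne (by rw [hc, h, mul_zero])
      have hc1 : c = 1 := by omega
      rw [hc, hc1, mul_one]
    have h2 : ((i.val : ℕ) : ZMod (2 * 2 ^ m)) = i := ZMod.natCast_zmod_val i
    rw [← h2, hval]

/-- A finite group which is cyclic or generalized quaternion, of order divisible by the
prime `p`, has an element of order `p` generating the unique subgroup of order `p`. -/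
lemma aux_exists_z {G : Type*} [Group G] [Finite G] (p : ℕ) (hp : p.Prime) (P : Sylow p G)
    (hP : IsCyclic P ∨ IsGeneralizedQuaternion P) [Nontrivial P] :
    ∃ z : G, z ∈ (P : Subgroup G) ∧ orderOf z = p ∧
      ∀ x : G, x ∈ (P : Subgroup G) → orderOf x = p → x ∈ Subgroup.zpowers z := by
  haveI : Fact p.Prime := ⟨hp⟩
  -- p divides the order of P
  have hdvd : p ∣ Nat.card P := by
    obtain ⟨n, hn⟩ := (IsPGroup.iff_card (p := p) (G := P)).mp P.isPGroup'
    have h1 : 1 < Nat.card P := Finite.one_lt_card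
    have hn0 : n ≠ 0 := by rintro rfl; rw [hn, pow_zero] at h1; omega
    rw [hn]
    exact dvd_pow_self p hn0
  obtain ⟨z0, hz0⟩ := exists_prime_orderOf_dvd_card' (G := P) p hdvd
  refine ⟨(z0 : G), z0.2, by rw [Subgroup.orderOf_coe, hz0], ?_⟩
  intro x hxP hx
  set x0 : (P : Subgroup G) := ⟨x, hxP⟩ with hx0def
  have hx0 : orderOf x0 = p := by rw [hx0def, Subgroup.orderOf_mk, hx]
  -- It suffices to show `x0 ∈ zpowers z0` inside `P`.
  suffices h : x0 ∈ Subgroup.zpowers z0 by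
    obtain ⟨k, hk⟩ := Subgroup.mem_zpowers_iff.mp h
    refine Subgroup.mem_zpowers_iff.mpr ⟨k, ?_⟩
    have := congrArg (fun a : (P : Subgroup G) => (a : G)) hk
    simpa using this
  rcases hP with hcyc | hquat
  · -- cyclic case
    haveI : IsCyclic (P : Subgroup G) := hcyc
    classical
    letI : Fintype (P : Subgroup G) := Fintype.ofFinite _
    obtain ⟨c, hc⟩ := IsCyclic.exists_generator (α := (P : Subgroup G))
    -- the subgroup of solutions of `a ^ p = 1`
    have hScomm : ∀ a b : (P : Subgroup G), Commute a b := by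
      intro a b
      obtain ⟨i, hi⟩ := Subgroup.mem_zpowers_iff.mp (hc a)
      obtain ⟨j, hj⟩ := Subgroup.mem_zpowers_iff.mp (hc b)
      rw [← hi, ← hj]
      exact Commute.zpow_zpow (Commute.refl c) i j
    set S : Subgroup (P : Subgroup G) :=
      { carrier := {a | a ^ p = 1}
        one_mem' := one_pow p
        mul_mem' := by
          intro a b ha hb
          have : (a * b) ^ p = a ^ p * b ^ p := (hScomm a b).mul_pow p
          simp only [Set.mem_setOf_eq] at ha hb ⊢
          rw [this, ha, hb, mul_one]
        inv_mem' := by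
          intro a ha
          simp only [Set.mem_setOf_eq] at ha ⊢
          rw [inv_pow, ha, inv_one] } with hSdef
    have hmemS : ∀ a : (P : Subgroup G), a ∈ S ↔ a ^ p = 1 := fun a => Iff.rfl
    have hcardS : Nat.card S ≤ p := by
      have h1 : ({a : (P : Subgroup G) | a ^ p = 1} : Finset _).card ≤ p :=
        IsCyclic.card_pow_eq_one_le hp.pos
      have h2 : Nat.card S = ({a : (P : Subgroup G) | a ^ p = 1} : Finset _).card := by
        rw [Nat.card_eq_fintype_card, Fintype.card_subtype]
        congr 1
        ext a
        simp [hmemS]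
      omega
    have hz0S : Subgroup.zpowers z0 ≤ S := by
      refine Subgroup.zpowers_le.mpr ?_
      show z0 ^ p = 1
      have h := pow_orderOf_eq_one z0
      rwa [hz0] at h
    have hx0S : Subgroup.zpowers x0 ≤ S := by
      refine Subgroup.zpowers_le.mpr ?_
      show x0 ^ p = 1
      have h := pow_orderOf_eq_one x0
      rwa [hx0] at h
    have hz0card : Nat.card (Subgroup.zpowers z0) = p := by rw [Nat.card_zpowers, hz0]
    have heq : Subgroup.zpowers z0 = S :=
      Subgroup.eq_of_le_of_card_ge hz0S (by omega)
    rw [heq]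
    exact hx0S (Subgroup.mem_zpowers x0)
  · -- generalized quaternion case
    obtain ⟨m, _hm, ⟨e⟩⟩ := hquat
    -- p = 2
    have hp2 : p = 2 := by
      have hcard : Nat.card P = 2 ^ (m + 2) := by
        rw [Nat.card_congr e.toEquiv, Nat.card_eq_fintype_card, QuaternionGroup.card]
        ring
      have : p ∣ 2 ^ (m + 2) := hcard ▸ hdvd
      have := hp.dvd_of_dvd_pow this
      exact (Nat.prime_dvd_prime_iff_eq hp Nat.prime_two).mp this
    have h1 : e x0 = e z0 := by
      have hex : orderOf (e x0) = 2 := by rw [MulEquiv.orderOf_eq, hx0, hp2]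
      have hez : orderOf (e z0) = 2 := by rw [MulEquiv.orderOf_eq, hz0, hp2]
      rw [aux_quat_inv _ hex, aux_quat_inv _ hez]
    have : x0 = z0 := e.injective h1
    rw [this]
    exact Subgroup.mem_zpowers z0

theorem stmt_15 {G : Type*} [Group G] [Finite G] (hnil : Group.IsNilpotent G)
    (p : ℕ) (hp : p.Prime) (P : Sylow p G)
    (hP : IsCyclic P ∨ IsGeneralizedQuaternion P) [Nontrivial P] :
    ∃ z : G, z ≠ 1 ∧ ∀ g : G, g ≠ 1 → g ≠ z →
      IsCyclic (Subgroup.closure ({z, g} : Set G)) := by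
  haveI : Fact p.Prime := ⟨hp⟩
  haveI : Group.IsNilpotent G := hnil
  obtain ⟨z, hzP, hz, huniq⟩ := aux_exists_z p hp P hP
  have hz1 : z ≠ 1 := by
    intro h
    rw [h, orderOf_one] at hz
    exact hp.one_lt.ne' hz.symm
  -- all Sylow subgroups are normal
  have hnorm : ∀ (q : ℕ) [Fact q.Prime] (Q : Sylow q G), (Q : Subgroup G).Normal := by
    intro q _ Q
    exact Sylow.normal_of_normalizerCondition (normalizerCondition_of_isNilpotent) Q
  have hPnorm : (P : Subgroup G).Normal := hnorm p P
  letI : Unique (Sylow p G) := Sylow.unique_of_normal P hPnorm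
  -- every p-element of G lies in P
  have hpmem : ∀ x : G, IsPGroup p (Subgroup.zpowers x) → x ∈ (P : Subgroup G) := by
    intro x hx
    obtain ⟨Q, hQ⟩ := hx.exists_le_sylow
    have hQP : Q = P := Subsingleton.elim Q P
    exact hQP ▸ hQ (Subgroup.mem_zpowers x)
  -- `z` lies in the cyclic subgroup generated by every nontrivial p-element
  have hkey : ∀ x : G, x ≠ 1 → IsPGroup p (Subgroup.zpowers x) → z ∈ Subgroup.zpowers x := by
    intro x hx1 hx
    obtain ⟨j, hj⟩ : ∃ j, orderOf x = p ^ j := by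
      obtain ⟨k, hk⟩ := hx ⟨x, Subgroup.mem_zpowers x⟩
      have hk' : x ^ p ^ k = 1 := by
        have := congrArg (fun a : Subgroup.zpowers x => (a : G)) hk
        simpa using this
      obtain ⟨j, _, hj⟩ := (Nat.dvd_prime_pow hp).mp (orderOf_dvd_of_pow_eq_one hk')
      exact ⟨j, hj⟩
    have hj0 : j ≠ 0 := by
      rintro rfl
      rw [pow_zero, orderOf_eq_one_iff] at hj
      exact hx1 hj
    set y := x ^ p ^ (j - 1) with hydef
    have hy_ord : orderOf y = p := by
      have hj1 : j - (j - 1) = 1 := by omega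
      rw [hydef, orderOf_pow, hj, Nat.gcd_eq_right (pow_dvd_pow p (Nat.sub_le j 1)),
        Nat.pow_div (Nat.sub_le j 1) hp.pos, hj1, pow_one]
    have hxP : x ∈ (P : Subgroup G) := hpmem x hx
    have hymem : y ∈ Subgroup.zpowers z := huniq y (pow_mem hxP _) hy_ord
    have heq : Subgroup.zpowers y = Subgroup.zpowers z := aux_zpowers_eq hp hy_ord hz hymem
    have hzy : z ∈ Subgroup.zpowers y := heq ▸ Subgroup.mem_zpowers z
    exact Subgroup.zpowers_le.mpr (pow_mem (Subgroup.mem_zpowers x) _) hzy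
  -- if p divides the order of g, then z ∈ ⟨g⟩
  have hzg : ∀ g : G, p ∣ orderOf g → z ∈ Subgroup.zpowers g := by
    intro g hpn
    have hn0 : orderOf g ≠ 0 := (orderOf_pos g).ne'
    set k := (orderOf g).factorization p with hkdef
    have hk0 : k ≠ 0 := (hp.factorization_pos_of_dvd hn0 hpn).ne'
    have hdvd : p ^ k ∣ orderOf g := Nat.ordProj_dvd (orderOf g) p
    set b := orderOf g / p ^ k with hbdef
    have hb : b ∣ orderOf g := Nat.div_dvd_of_dvd hdvd
    have hu_ord : orderOf (g ^ b) = p ^ k := by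
      rw [orderOf_pow, Nat.gcd_eq_right hb, hbdef, Nat.div_div_self hdvd hn0]
    have hu1 : g ^ b ≠ 1 := by
      intro h
      rw [h, orderOf_one] at hu_ord
      have h2 := Nat.one_lt_pow hk0 hp.one_lt
      omega
    have hmem : z ∈ Subgroup.zpowers (g ^ b) :=
      hkey _ hu1 (IsPGroup.of_card (by rw [Nat.card_zpowers, hu_ord]))
    exact Subgroup.zpowers_le.mpr (pow_mem (Subgroup.mem_zpowers g) b) hmem
  -- z is central
  have hcomm : ∀ (n : ℕ) (g : G), orderOf g = n → Commute z g := by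
    intro n
    induction n using Nat.strong_induction_on with
    | _ n ih =>
      intro g hg
      rcases eq_or_ne g 1 with rfl | hg1
      · exact Commute.one_right z
      have hn0 : n ≠ 0 := hg ▸ (orderOf_pos g).ne'
      by_cases hpn : p ∣ n
      · obtain ⟨t, ht⟩ := Subgroup.mem_zpowers_iff.mp (hzg g (hg ▸ hpn))
        rw [← ht]
        exact (Commute.refl g).zpow_left t
      · have hn1 : n ≠ 1 := fun h => hg1 (orderOf_eq_one_iff.mp (hg ▸ h : orderOf g = 1))
        obtain ⟨q, hq, hqn⟩ := Nat.exists_prime_and_dvd hn1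
        haveI : Fact q.Prime := ⟨hq⟩
        have hqp : p ≠ q := fun h => hpn (h ▸ hqn)
        set e := n.factorization q with hedef
        have he0 : e ≠ 0 := (hq.factorization_pos_of_dvd hn0 hqn).ne'
        have hadvd : q ^ e ∣ n := Nat.ordProj_dvd n q
        set b := n / q ^ e with hbdef
        have hbdvd : b ∣ n := Nat.div_dvd_of_dvd hadvd
        -- the q-part u = g ^ b
        have hu_ord : orderOf (g ^ b) = q ^ e := by
          rw [orderOf_pow, hg, Nat.gcd_eq_right hbdvd, hbdef, Nat.div_div_self hadvd hn0]
        have hcu : Commute z (g ^ b) := by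
          have huq : IsPGroup q (Subgroup.zpowers (g ^ b)) :=
            IsPGroup.of_card (by rw [Nat.card_zpowers, hu_ord])
          obtain ⟨Q, hQ⟩ := huq.exists_le_sylow
          exact Subgroup.commute_of_normal_of_disjoint (P : Subgroup G) (Q : Subgroup G)
            hPnorm (hnorm q Q)
            (IsPGroup.disjoint_of_ne p q hqp _ _ P.isPGroup' Q.isPGroup')
            z (g ^ b) hzP (hQ (Subgroup.mem_zpowers _))
        -- the q'-part v = g ^ (q ^ e)
        have hv_ord : orderOf (g ^ q ^ e) = b := by
          rw [orderOf_pow, hg, Nat.gcd_eq_right hadvd]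
        have hblt : b < n := by
          have h1 : 1 < q ^ e := Nat.one_lt_pow he0 hq.one_lt
          have := Nat.div_lt_self (Nat.pos_of_ne_zero hn0) h1
          exact hbdef ▸ this
        have hcv : Commute z (g ^ q ^ e) := ih b hblt _ hv_ord
        -- combine via Bezout
        have hcop : Nat.Coprime (q ^ e) b :=
          (Nat.Coprime.pow_left e (Nat.coprime_ordCompl hq hn0))
        obtain ⟨s, t, hst⟩ := Nat.isCoprime_iff_coprime.mpr hcop
        have hst' : ((q ^ e : ℕ) : ℤ) * s + ((b : ℕ) : ℤ) * t = 1 := by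
          rw [mul_comm ((q ^ e : ℕ) : ℤ) s, mul_comm ((b : ℕ) : ℤ) t]; exact hst
        have hgeq : (g ^ q ^ e) ^ s * (g ^ b) ^ t = g := by
          rw [← zpow_natCast g (q ^ e), ← zpow_natCast g b, ← zpow_mul, ← zpow_mul,
            ← zpow_add, hst', zpow_one]
        exact hgeq ▸ ((hcv.zpow_right s).mul_right (hcu.zpow_right t))
  refine ⟨z, hz1, ?_⟩
  intro g hg1 hgz
  by_cases hpn : p ∣ orderOf g
  · -- z ∈ ⟨g⟩, so closure {z, g} = ⟨g⟩
    have hzmem : z ∈ Subgroup.zpowers g := hzg g hpn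
    have heq : Subgroup.closure ({z, g} : Set G) = Subgroup.zpowers g := by
      apply le_antisymm
      · rw [Subgroup.closure_le]
        rintro a (rfl | rfl)
        · exact hzmem
        · exact Subgroup.mem_zpowers _
      · rw [Subgroup.zpowers_le]
        exact Subgroup.subset_closure (by simp)
    rw [heq]
    exact aux_isCyclic_zpowers g
  · have hcop : Nat.Coprime p (orderOf g) := hp.coprime_iff_not_dvd.mpr hpn
    have hc : Commute z g := hcomm _ g rfl
    set w := z * g with hwdef
    have hwn : w ^ orderOf g = z ^ orderOf g := by
      rw [hwdef, hc.mul_pow, pow_orderOf_eq_one, mul_one]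
    have hzn_ord : orderOf (z ^ orderOf g) = p := by
      rw [orderOf_pow, hz, Nat.Coprime.gcd_eq_one hcop, Nat.div_one]
    have hzn_mem : z ^ orderOf g ∈ Subgroup.zpowers z := pow_mem (Subgroup.mem_zpowers z) _
    have heq1 : Subgroup.zpowers (z ^ orderOf g) = Subgroup.zpowers z :=
      aux_zpowers_eq hp hzn_ord hz hzn_mem
    have hzw : z ∈ Subgroup.zpowers w := by
      have h1 : z ∈ Subgroup.zpowers (z ^ orderOf g) := heq1 ▸ Subgroup.mem_zpowers z
      rw [← hwn] at h1
      exact Subgroup.zpowers_le.mpr (pow_mem (Subgroup.mem_zpowers w) _) h1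
    have hgw : g ∈ Subgroup.zpowers w := by
      have := mul_mem (inv_mem hzw) (Subgroup.mem_zpowers w)
      rwa [hwdef, inv_mul_cancel_left] at this
    have heq : Subgroup.closure ({z, g} : Set G) = Subgroup.zpowers w := by
      apply le_antisymm
      · rw [Subgroup.closure_le]
        rintro a (rfl | rfl)
        · exact hzw
        · exact hgw
      · rw [Subgroup.zpowers_le, hwdef]
        exact mul_mem (Subgroup.subset_closure (by simp)) (Subgroup.subset_closure (by simp))
    rw [heq]
    exact aux_isCyclic_zpowers w
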